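/- arXiv:2302.02713 — 2 statements merged into one kernel-verified Lean document; each statement's English description precedes it below -/
import Mathlib

section
/- Let (Θ, 𝒜) be a measurable space, P a probability measure on Θ, L : Θ → ℝ a bounded measurable function, and λ ≥ 0. Define the Gibbs measure Q* by dQ*/dP = exp(−λ·L(θ))/Z where Z = ∫_Θ exp(−λ·L(θ)) dP(θ). Then Q* minimizes the objective Q ↦ λ·∫_Θ L dQ + KL(Q, P) over all probability measures Q absolutely continuous with respect to P; that is, for every such Q, λ·∫_Θ L dQ* + KL(Q*, P) ≤ λ·∫_Θ L dQ + KL(Q, P). -/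
open MeasureTheory Real

/- Kullback–Leibler divergence `KL(μ, ν) = ∫ log (dμ/dν) dμ` when `μ ≪ ν` (and the
log-likelihood ratio is integrable), `+∞` otherwise. -/
open Classical in
noncomputable def klDiv {α : Type*} [MeasurableSpace α] (μ ν : Measure α) : EReal :=
  if μ ≪ ν ∧ Integrable (llr μ ν) μ then ((∫ x, llr μ ν x ∂μ : ℝ) : EReal) else ⊤

/-- Gibbs' inequality: the integral of the log-likelihood ratio is nonnegative. -/
lemma gibbs_integral_llr_nonneg {α : Type*} [MeasurableSpace α] (μ ν : Measure α)
    [IsProbabilityMeasure μ] [IsProbabilityMeasure ν] (hμν : μ ≪ ν)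
    (h_int : Integrable (llr μ ν) μ) : 0 ≤ ∫ x, llr μ ν x ∂μ := by
  have h_eq : (fun x ↦ exp (- llr μ ν x)) =ᵐ[μ] fun x ↦ (ν.rnDeriv μ x).toReal :=
    exp_neg_llr hμν
  have h_int_exp : Integrable (fun x ↦ exp (- llr μ ν x)) μ :=
    (Measure.integrable_toReal_rnDeriv).congr h_eq.symm
  have h_jensen : exp (∫ x, - llr μ ν x ∂μ) ≤ ∫ x, exp (- llr μ ν x) ∂μ := by
    refine convexOn_exp.map_integral_le continuous_exp.continuousOn isClosed_univ
      (Filter.Eventually.of_forall fun x ↦ Set.mem_univ _) h_int.neg ?_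
    exact h_int_exp
  have h_le_one : ∫ x, exp (- llr μ ν x) ∂μ ≤ 1 := by
    rw [integral_congr_ae h_eq]
    calc ∫ x, (ν.rnDeriv μ x).toReal ∂μ
        ≤ (ν Set.univ).toReal := by
          rw [← setIntegral_univ]
          exact Measure.setIntegral_toReal_rnDeriv_le (measure_ne_top _ _)
      _ = 1 := by simp
  have := h_jensen.trans h_le_one
  rw [integral_neg] at this
  have h0 : exp (-∫ x, llr μ ν x ∂μ) ≤ exp 0 := by simpa using this
  have := exp_le_exp.mp h0
  linarith

/-- The Gibbs measure `Q*` with `dQ*/dP = exp(-λ L)/Z` minimizes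
`Q ↦ λ ∫ L dQ + KL(Q, P)` over probability measures `Q ≪ P`. -/
theorem gibbs_posterior_minimizes
    {Θ : Type*} [MeasurableSpace Θ] (P : Measure Θ) [IsProbabilityMeasure P]
    (L : Θ → ℝ) (hLmeas : Measurable L) (C : ℝ) (hLbdd : ∀ θ, |L θ| ≤ C)
    (lam : ℝ) (hlam : 0 ≤ lam)
    (Zpart : ℝ) (hZ : Zpart = ∫ θ, Real.exp (-lam * L θ) ∂P)
    (Qstar : Measure Θ)
    (hQstar : Qstar = P.withDensity fun θ => ENNReal.ofReal (Real.exp (-lam * L θ) / Zpart))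
    (Q : Measure Θ) [IsProbabilityMeasure Q] (hQP : Q ≪ P) :
    ((lam * ∫ θ, L θ ∂Qstar : ℝ) : EReal) + klDiv Qstar P
      ≤ ((lam * ∫ θ, L θ ∂Q : ℝ) : EReal) + klDiv Q P := by
  classical
  set f : Θ → ℝ := fun θ ↦ -lam * L θ with hf
  have hfmeas : Measurable f := (hLmeas.const_mul (-lam))
  -- boundedness facts
  have hfbdd : ∀ θ, |f θ| ≤ lam * C := by
    intro θ
    rw [hf, abs_mul, abs_neg, abs_of_nonneg hlam]
    exact mul_le_mul_of_nonneg_left (hLbdd θ) hlam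
  have h_int_f : ∀ (μ : Measure Θ) [IsProbabilityMeasure μ], Integrable f μ := by
    intro μ _
    exact (integrable_const (lam * C)).mono' hfmeas.aestronglyMeasurable
      (Filter.Eventually.of_forall hfbdd)
  have h_int_L : ∀ (μ : Measure Θ) [IsProbabilityMeasure μ], Integrable L μ := by
    intro μ _
    exact (integrable_const C).mono' hLmeas.aestronglyMeasurable
      (Filter.Eventually.of_forall hLbdd)
  have h_int_exp : Integrable (fun θ ↦ exp (f θ)) P := by
    refine (integrable_const (exp (lam * C))).mono' (hfmeas.exp).aestronglyMeasurable ?_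
    refine Filter.Eventually.of_forall fun θ ↦ ?_
    rw [Real.norm_eq_abs, abs_of_nonneg (exp_pos _).le]
    exact exp_le_exp.mpr ((le_abs_self _).trans (hfbdd θ))
  -- Qstar is the tilted measure
  have hQs : Qstar = P.tilted f := by
    rw [hQstar, Measure.tilted, hZ]
  have hQsP : Qstar ≪ P := hQs ▸ tilted_absolutelyContinuous P f
  have hPQs : P ≪ Qstar := hQs ▸ absolutelyContinuous_tilted h_int_exp
  have hQsProb : IsProbabilityMeasure Qstar := hQs ▸ isProbabilityMeasure_tilted h_int_exp
  -- llr Qstar P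
  have h_llr_Qs : llr Qstar P =ᵐ[Qstar] fun θ ↦ f θ - log (∫ θ, exp (f θ) ∂P) := by
    have h1 : llr (P.tilted f) P =ᵐ[P]
        fun x ↦ f x - log (∫ z, exp (f z) ∂P) + llr P P x :=
      llr_tilted_left Measure.AbsolutelyContinuous.rfl h_int_exp hfmeas.aemeasurable
    have h2 : llr P P =ᵐ[P] fun _ ↦ (0 : ℝ) := by
      filter_upwards [Measure.rnDeriv_self P] with x hx
      simp [llr, hx]
    have h3 : llr Qstar P =ᵐ[P] fun θ ↦ f θ - log (∫ θ, exp (f θ) ∂P) := by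
      rw [hQs]
      filter_upwards [h1, h2] with x hx1 hx2
      rw [hx1, hx2, add_zero]
    exact hQsP.ae_le h3
  have h_int_llr_Qs : Integrable (llr Qstar P) Qstar := by
    rw [integrable_congr h_llr_Qs]
    exact (h_int_f Qstar).sub (integrable_const _)
  have hlogZ : ∫ θ, llr Qstar P θ ∂Qstar
      = ∫ θ, f θ ∂Qstar - log (∫ θ, exp (f θ) ∂P) := by
    rw [integral_congr_ae h_llr_Qs, integral_sub (h_int_f Qstar) (integrable_const _)]
    simp
  have h_f_int_eq : ∀ (μ : Measure Θ) [IsProbabilityMeasure μ],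
      ∫ θ, f θ ∂μ = -lam * ∫ θ, L θ ∂μ := by
    intro μ _
    rw [hf]
    simp only [neg_mul]
    rw [integral_neg, integral_const_mul]
  -- LHS value
  have hKLQs : klDiv Qstar P = ((∫ θ, llr Qstar P θ ∂Qstar : ℝ) : EReal) := by
    rw [klDiv, if_pos ⟨hQsP, h_int_llr_Qs⟩]
  by_cases hQint : Integrable (llr Q P) Q
  · have hKLQ : klDiv Q P = ((∫ θ, llr Q P θ ∂Q : ℝ) : EReal) := by
      rw [klDiv, if_pos ⟨hQP, hQint⟩]
    rw [hKLQs, hKLQ, ← EReal.coe_add, ← EReal.coe_add, EReal.coe_le_coe_iff]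
    -- key: Gibbs inequality applied to Q vs Qstar
    have hQQs : Q ≪ Qstar := hQP.trans hPQs
    have h_int_llr_QQs : Integrable (llr Q Qstar) Q := by
      rw [hQs]
      exact integrable_llr_tilted_right hQP (h_int_f Q) hQint h_int_exp
    have h_nonneg : 0 ≤ ∫ θ, llr Q Qstar θ ∂Q :=
      gibbs_integral_llr_nonneg Q Qstar hQQs h_int_llr_QQs
    have h_eq : ∫ θ, llr Q Qstar θ ∂Q
        = ∫ θ, llr Q P θ ∂Q - ∫ θ, f θ ∂Q + log (∫ θ, exp (f θ) ∂P) := by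
      rw [hQs]
      exact integral_llr_tilted_right hQP (h_int_f Q) h_int_exp hQint
    rw [hlogZ, h_f_int_eq Qstar, h_f_int_eq Q] at *
    rw [h_eq] at h_nonneg
    linarith
  · have hKLQ : klDiv Q P = ⊤ := by
      rw [klDiv, if_neg]
      rintro ⟨-, h⟩
      exact hQint h
    rw [hKLQ]
    rw [EReal.add_top_of_ne_bot (EReal.coe_ne_bot _)]
    exact le_top
end

section
/- Let k ≥ 1, σ > 0, and let ε be a random vector in ℝ^k distributed according to the isotropic Gaussian N(0, σ²I_k) (the k-fold product of centered one-dimensional Gaussians with variance σ²). Then for every t ≥ 0, P(‖ε‖² ≥ σ²·(k + 2√(k·t) + 2t)) ≤ exp(−t), where ‖ε‖ is the Euclidean norm (so ‖ε‖²/σ² has the chi-squared distribution with k degrees of freedom). -/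
open MeasureTheory Real
open scoped NNReal
open ProbabilityTheory
open scoped ENNReal

/- The isotropic Gaussian `N(m, v I_k)` on `ℝ^k` (with the Euclidean norm), i.e. the
`k`-fold product of one-dimensional Gaussians with means `m i` and common variance `v`. -/
noncomputable def gaussianPi {k : ℕ} (m : EuclideanSpace ℝ (Fin k)) (v : ℝ≥0) :
    Measure (EuclideanSpace ℝ (Fin k)) :=
  (Measure.pi fun i => ProbabilityTheory.gaussianReal (m i) v).map
    (MeasurableEquiv.toLp 2 (Fin k → ℝ))

lemma neg_log_le (x : ℝ) (h0 : 0 ≤ x) (h1 : x < 1) :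
    -Real.log (1 - x) ≤ x * (2 - x) / (2 * (1 - x)) := by
  have h1x : 0 < 1 - x := by linarith
  set L : ℝ := -Real.log (1 - x) with hL
  have hL0 : 0 ≤ L := by
    rw [hL, neg_nonneg]
    exact Real.log_nonpos (by linarith) (by linarith)
  have hsinh : L ≤ Real.sinh L := Real.self_le_sinh_iff.mpr hL0
  have heL : Real.exp L = (1 - x)⁻¹ := by
    rw [hL, Real.exp_neg, Real.exp_log h1x]
  have heL' : Real.exp (-L) = 1 - x := by
    rw [hL, neg_neg, Real.exp_log h1x]
  have : Real.sinh L = x * (2 - x) / (2 * (1 - x)) := by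
    rw [Real.sinh_eq, heL, heL']
    field_simp
    ring
  linarith

lemma final_num (k : ℕ) (hk : 1 ≤ k) (σ : ℝ) (hσ : 0 < σ) (t : ℝ) (ht : 0 ≤ t) :
    rexp (-(Real.sqrt t / (Real.sqrt k + 2 * Real.sqrt t) / σ ^ 2) *
        (σ ^ 2 * (k + 2 * Real.sqrt (k * t) + 2 * t))) *
      ((Real.sqrt (1 - 2 * (Real.sqrt t / (Real.sqrt k + 2 * Real.sqrt t))))⁻¹) ^ k
      ≤ rexp (-t) := by
  have hk0 : (0:ℝ) ≤ k := Nat.cast_nonneg k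
  set a : ℝ := Real.sqrt k with hadef
  set b : ℝ := Real.sqrt t with hbdef
  have ha1 : 1 ≤ a := by
    have := Real.sqrt_le_sqrt (show (1:ℝ) ≤ k by exact_mod_cast hk)
    rwa [Real.sqrt_one] at this
  have hb0 : 0 ≤ b := Real.sqrt_nonneg t
  have hd : 0 < a + 2 * b := by linarith
  set L : ℝ := b / (a + 2 * b) with hLdef
  have hL0 : 0 ≤ L := div_nonneg hb0 hd.le
  have hx : 2 * L < 1 := by
    rw [hLdef, mul_div_assoc']
    rw [div_lt_one hd]
    linarith
  have h1x : 0 < 1 - 2 * L := by linarith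
  have hk' : (k:ℝ) = a ^ 2 := (Real.sq_sqrt hk0).symm
  have ht' : t = b ^ 2 := (Real.sq_sqrt ht).symm
  have hkt : Real.sqrt ((k:ℝ) * t) = a * b := Real.sqrt_mul hk0 t
  have hexp1 : -(L / σ ^ 2) * (σ ^ 2 * ((k:ℝ) + 2 * Real.sqrt ((k:ℝ) * t) + 2 * t))
      = -(L * (a ^ 2 + 2 * (a * b) + 2 * b ^ 2)) := by
    rw [hkt, hk', ht']
    field_simp
  have h2 : ((Real.sqrt (1 - 2 * L))⁻¹) ^ k = rexp ((k:ℝ) * (-(1 / 2) * Real.log (1 - 2 * L))) := by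
    have hs : (0:ℝ) < (Real.sqrt (1 - 2 * L))⁻¹ := by
      rw [inv_pos]
      exact Real.sqrt_pos.mpr h1x
    rw [← Real.exp_log hs, ← Real.exp_nat_mul]
    congr 1
    rw [Real.log_inv, Real.log_sqrt h1x.le]
    ring
  rw [hexp1, h2, ← Real.exp_add, Real.exp_le_exp]
  have hlog := neg_log_le (2 * L) (by positivity) hx
  have hlog2 : (a ^ 2 / 2) * (-Real.log (1 - 2 * L))
      ≤ (a ^ 2 / 2) * ((2 * L) * (2 - 2 * L) / (2 * (1 - 2 * L))) :=
    mul_le_mul_of_nonneg_left hlog (by positivity)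
  have key : (a ^ 2 / 2) * ((2 * L) * (2 - 2 * L) / (2 * (1 - 2 * L)))
      = L * (a ^ 2 + 2 * (a * b) + 2 * b ^ 2) - b ^ 2 := by
    have h1 : 1 - 2 * L = a / (a + 2 * b) := by
      rw [hLdef]; field_simp; ring
    rw [h1, hLdef]
    have ha0 : (0:ℝ) < a := by linarith
    field_simp
    ring
  rw [hk', ht']
  nlinarith [hlog2, key]

lemma gauss_sq_exp (v : ℝ≥0) (hv : 0 < (v : ℝ)) (a : ℝ) (hav : 2 * a * (v : ℝ) < 1) :
    Integrable (fun x => rexp (a * x ^ 2)) (gaussianReal 0 v) ∧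
      ∫ x, rexp (a * x ^ 2) ∂(gaussianReal 0 v) = (Real.sqrt (1 - 2 * a * (v : ℝ)))⁻¹ := by
  have hvne : v ≠ 0 := by
    intro h; rw [h] at hv; simp at hv
  have h2v : (0:ℝ) < 2 * (v:ℝ) := by positivity
  set b' : ℝ := 1 / (2 * (v : ℝ)) - a with hb'
  have hb'pos : 0 < b' := by
    rw [hb', sub_pos, lt_div_iff₀ h2v]; linarith
  have hpdf : ∀ x : ℝ, gaussianPDFReal 0 v x * rexp (a * x ^ 2)
      = (Real.sqrt (2 * π * v))⁻¹ * rexp (-b' * x ^ 2) := by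
    intro x
    rw [gaussianPDFReal]
    rw [mul_assoc, ← Real.exp_add]
    congr 2
    rw [hb']
    field_simp
    ring
  have hm : Measurable fun x => (gaussianPDFReal 0 v x).toNNReal :=
    (measurable_gaussianPDFReal 0 v).real_toNNReal
  have hpdf_eq : gaussianPDF 0 v = fun x => ((gaussianPDFReal 0 v x).toNNReal : ℝ≥0∞) := rfl
  have hsmul : ∀ x : ℝ, (gaussianPDFReal 0 v x).toNNReal • rexp (a * x ^ 2)
      = (Real.sqrt (2 * π * v))⁻¹ * rexp (-b' * x ^ 2) := by
    intro x
    rw [NNReal.smul_def, smul_eq_mul, Real.coe_toNNReal _ (gaussianPDFReal_nonneg 0 v x), hpdf]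
  rw [gaussianReal_of_var_ne_zero _ hvne, hpdf_eq]
  constructor
  · rw [integrable_withDensity_iff_integrable_smul hm]
    have : Integrable (fun x => (Real.sqrt (2 * π * v))⁻¹ * rexp (-b' * x ^ 2)) :=
      (integrable_exp_neg_mul_sq hb'pos).const_mul _
    exact this.congr (ae_of_all _ fun x => (hsmul x).symm)
  · rw [integral_withDensity_eq_integral_smul hm]
    simp_rw [hsmul]
    rw [integral_const_mul, integral_gaussian]
    have h1 : 1 - 2 * a * (v:ℝ) = 2 * (v:ℝ) * b' := by
      rw [hb']; field_simp
    rw [h1, ← Real.sqrt_inv, ← Real.sqrt_inv, ← Real.sqrt_mul (by positivity)]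
    congr 1
    field_simp

lemma pi_prod_integrable (k : ℕ) (γ : Measure ℝ) [SigmaFinite γ] (g : ℝ → ℝ)
    (hg : Integrable g γ) :
    Integrable (fun y : Fin k → ℝ => ∏ i, g (y i)) (Measure.pi fun _ => γ) := by
  letI : MeasureSpace ℝ := ⟨γ⟩
  haveI : SigmaFinite (volume : Measure ℝ) := ‹SigmaFinite γ›
  exact Integrable.fintype_prod (𝕜 := ℝ) (E := ℝ) (ι := Fin k) (f := fun _ : Fin k => g) fun _ => hg

lemma pi_prod_integral (k : ℕ) (γ : Measure ℝ) [SigmaFinite γ] (g : ℝ → ℝ)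
    (hg : Integrable g γ) :
    ∫ y : Fin k → ℝ, ∏ i, g (y i) ∂(Measure.pi fun _ => γ) = (∫ x, g x ∂γ) ^ k := by
  letI : MeasureSpace ℝ := ⟨γ⟩
  haveI : SigmaFinite (volume : Measure ℝ) := ‹SigmaFinite γ›
  simpa using integral_fintype_prod_eq_pow (ι := Fin k) g

/-- Laurent–Massart chi-squared upper tail: if `ε ~ N(0, σ²I_k)` on `ℝ^k`, then for all
`t ≥ 0`, `P(‖ε‖² ≥ σ²(k + 2√(kt) + 2t)) ≤ exp(-t)`. -/
theorem chi_squared_tail (k : ℕ) (hk : 1 ≤ k) (σ : ℝ) (hσ : 0 < σ) (t : ℝ) (ht : 0 ≤ t) :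
    gaussianPi (0 : EuclideanSpace ℝ (Fin k)) ⟨σ ^ 2, sq_nonneg σ⟩
        {x | σ ^ 2 * (k + 2 * Real.sqrt (k * t) + 2 * t) ≤ ‖x‖ ^ 2}
      ≤ ENNReal.ofReal (Real.exp (-t)) := by
  set v : ℝ≥0 := ⟨σ ^ 2, sq_nonneg σ⟩ with hvdef
  set c : ℝ := σ ^ 2 * (k + 2 * Real.sqrt (k * t) + 2 * t) with hcdef
  set γ : Measure ℝ := gaussianReal 0 v with hγdef
  set μ : Measure (Fin k → ℝ) := Measure.pi fun _ => γ with hμdef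
  have hS : MeasurableSet {x : EuclideanSpace ℝ (Fin k) | c ≤ ‖x‖ ^ 2} :=
    measurableSet_le measurable_const (measurable_norm.pow_const 2)
  have hmap : gaussianPi (0 : EuclideanSpace ℝ (Fin k)) v
        {x | c ≤ ‖x‖ ^ 2}
      = μ {y | c ≤ ∑ i, (y i) ^ 2} := by
    rw [show gaussianPi (0 : EuclideanSpace ℝ (Fin k)) v
        = μ.map (MeasurableEquiv.toLp 2 (Fin k → ℝ)) from rfl]
    rw [Measure.map_apply (MeasurableEquiv.measurable _) hS]
    congr 1
    ext y
    simp only [Set.mem_preimage, Set.mem_setOf_eq]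
    have hnorm : ‖(MeasurableEquiv.toLp 2 (Fin k → ℝ)) y‖ ^ 2 = ∑ i, (y i) ^ 2 := by
      rw [EuclideanSpace.norm_eq, Real.sq_sqrt (by positivity)]
      exact Finset.sum_congr rfl fun i _ => by rw [Real.norm_eq_abs, sq_abs]; rfl
    rw [hnorm]
  rw [hmap]
  -- parameters
  set L : ℝ := Real.sqrt t / (Real.sqrt k + 2 * Real.sqrt t) with hLdef
  set l : ℝ := L / σ ^ 2 with hldef
  have ha1 : 1 ≤ Real.sqrt k := by
    have := Real.sqrt_le_sqrt (show (1:ℝ) ≤ k by exact_mod_cast hk)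
    rwa [Real.sqrt_one] at this
  have hb0 : 0 ≤ Real.sqrt t := Real.sqrt_nonneg t
  have hd : 0 < Real.sqrt k + 2 * Real.sqrt t := by linarith
  have hL0 : 0 ≤ L := div_nonneg hb0 hd.le
  have hx : 2 * L < 1 := by
    rw [hLdef, mul_div_assoc', div_lt_one hd]
    linarith
  have hl0 : 0 ≤ l := div_nonneg hL0 (by positivity)
  have hvcoe : ((v : ℝ≥0) : ℝ) = σ ^ 2 := rfl
  have hvpos : 0 < ((v : ℝ≥0) : ℝ) := by rw [hvcoe]; positivity
  have hlv : 2 * l * ((v : ℝ≥0) : ℝ) < 1 := by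
    rw [hvcoe, hldef]
    have : 2 * (L / σ ^ 2) * σ ^ 2 = 2 * L := by field_simp
    rw [this]; exact hx
  obtain ⟨hint1, hval1⟩ := gauss_sq_exp v hvpos l hlv
  have hlL : 2 * l * ((v : ℝ≥0) : ℝ) = 2 * L := by
    rw [hvcoe, hldef]; field_simp
  -- Chernoff
  haveI : IsProbabilityMeasure γ := by rw [hγdef]; infer_instance
  haveI : IsProbabilityMeasure μ := by rw [hμdef]; exact MeasureTheory.Measure.pi.instIsProbabilityMeasure _
  have hprod : (fun y : Fin k → ℝ => rexp (l * ∑ i, (y i) ^ 2))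
      = fun y : Fin k → ℝ => ∏ i, rexp (l * (y i) ^ 2) := by
    funext y
    rw [Finset.mul_sum, Real.exp_sum]
  have h_int : Integrable (fun y : Fin k → ℝ => rexp (l * ∑ i, (y i) ^ 2)) μ := by
    rw [hprod, hμdef]
    exact pi_prod_integrable k γ _ hint1
  have hch := ProbabilityTheory.measure_ge_le_exp_mul_mgf
    (X := fun y : Fin k → ℝ => ∑ i, (y i) ^ 2) (μ := μ) c hl0 h_int
  have hmgf : mgf (fun y : Fin k → ℝ => ∑ i, (y i) ^ 2) μ l
      = ((Real.sqrt (1 - 2 * L))⁻¹) ^ k := by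
    rw [mgf, hprod, hμdef, pi_prod_integral k γ _ hint1, hval1, hlL]
  rw [hmgf] at hch
  have hnum := final_num k hk σ hσ t ht
  rw [← hLdef, ← hldef, ← hcdef] at hnum
  refine (ENNReal.le_ofReal_iff_toReal_le (measure_ne_top μ _) (Real.exp_pos _).le).mpr ?_
  exact hch.trans hnum
end
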